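/- Let G be a group with elements x_i(t), y_i(t) (t ∈ ℂ, 1 ≤ i ≤ n) and lifts s̄_i of simple reflections satisfying the relations x_i(1)s̄_i = y_i(1)x_i(−1), x_i(t)y_j(s) = y_j(s)x_i(t) for i ≠ j, and x_β(t)s̄_i = s̄_i x_{s_i(β)}(t') for some t' whenever β and s_i(β) are positive roots. Then for any enumeration (i₁,…,i_n) of {1,…,n} there exist w₁,…,w_n ∈ ℂ such that x_{i₁}(1)⋯x_{i_n}(1) s̄_{i_n}⋯s̄_{i₁} = y_{i_n}(1)⋯y_{i₁}(1) · x_{γ₁'}(w_n) x_{γ₂'}(w_{n−1}) ⋯ x_{γ_n'}(w₁), where γ_k' = s_{i₁}⋯s_{i_{k−1}}(α_{i_k})-type positive-root one-parameter elements, i.e. the right factor lies in the subgroup N generated by the x_β(t) for positive roots β. -/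

import Mathlib

section Aux
variable {G : Type*} [Group G] {n : ℕ}
variable (Pos : Set (Fin n → ℤ)) (σ : Fin n → (Fin n → ℤ) → (Fin n → ℤ))
variable (xr : (Fin n → ℤ) → ℂ → G) (y : Fin n → ℂ → G) (sbar : Fin n → G)

/-- Move a positive-root element rightward through a product of `sbar`'s. -/
lemma stmt17_moveA
    (hconj : ∀ β ∈ Pos, ∀ i : Fin n, σ i β ∈ Pos → ∀ t : ℂ, ∃ t' : ℂ,
      xr β t * sbar i = sbar i * xr (σ i β) t')
    (L : List (Fin n)) :
    ∀ β : Fin n → ℤ, (∀ m : ℕ, ((L.drop m).foldr (fun i v => σ i v) β) ∈ Pos) →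
    ∀ t : ℂ, ∃ t' : ℂ,
      xr β t * (L.reverse.map sbar).prod
        = (L.reverse.map sbar).prod * xr (L.foldr (fun i v => σ i v) β) t' := by
  induction L using List.reverseRecOn with
  | nil => intro β _ t; exact ⟨t, by simp⟩
  | append_singleton L' a ih =>
      intro β hβ t
      have hβPos : β ∈ Pos := by
        have := hβ (L'.length + 1); simpa using this
      have hσβPos : σ a β ∈ Pos := by
        have := hβ L'.length
        simpa [List.drop_append_of_le_length (le_refl L'.length), List.drop_length] using this
      obtain ⟨t₁, ht₁⟩ := hconj β hβPos a hσβPos t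
      have hβ' : ∀ m : ℕ, ((L'.drop m).foldr (fun i v => σ i v) (σ a β)) ∈ Pos := by
        intro m
        by_cases hm : m ≤ L'.length
        · have := hβ m
          rwa [List.drop_append_of_le_length hm, List.foldr_append] at this
        · rw [List.drop_eq_nil_of_le (le_of_not_ge hm)]
          simpa using hσβPos
      obtain ⟨t', ht'⟩ := ih (σ a β) hβ' t₁
      refine ⟨t', ?_⟩
      rw [List.reverse_append]
      simp only [List.reverse_singleton, List.singleton_append, List.map_cons, List.prod_cons,
        List.foldr_append, List.foldr_cons, List.foldr_nil]
      rw [← mul_assoc, ht₁, mul_assoc, ht', ← mul_assoc]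

/-- Commute `y j u` leftward through a product of simple-root `x`'s with indices ≠ j. -/
lemma stmt17_moveB
    (hcomm : ∀ i j : Fin n, i ≠ j → ∀ t u : ℂ,
      xr (Pi.single i 1) t * y j u = y j u * xr (Pi.single i 1) t)
    (L : List (Fin n)) (j : Fin n) (hj : j ∉ L) (u : ℂ) :
    (L.map fun i => xr (Pi.single i 1) 1).prod * y j u
      = y j u * (L.map fun i => xr (Pi.single i 1) 1).prod := by
  induction L with
  | nil => simp
  | cons a L' ih =>
      have ha : a ≠ j := fun h => hj (h ▸ (List.mem_cons_self : a ∈ a :: L'))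
      have hj' : j ∉ L' := fun h => hj (List.mem_cons_of_mem _ h)
      simp only [List.map_cons, List.prod_cons]
      rw [mul_assoc, ih hj', ← mul_assoc, hcomm a j ha 1 u, mul_assoc]

/-- The list of processed root elements. -/
def stmt17Gamma (i₀ : Fin n) (L : List (Fin n)) (w : ℕ → ℂ) : List G :=
  (List.range L.length).map fun k =>
    xr ((L.take k).foldr (fun i v => σ i v) (Pi.single (L.getD k i₀) 1)) (w k)

lemma stmt17_key
    (hsimple : ∀ i, (Pi.single i 1 : Fin n → ℤ) ∈ Pos)
    (hxs : ∀ i, xr (Pi.single i 1) 1 * sbar i = y i 1 * xr (Pi.single i 1) (-1))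
    (hcomm : ∀ i j : Fin n, i ≠ j → ∀ t u : ℂ,
      xr (Pi.single i 1) t * y j u = y j u * xr (Pi.single i 1) t)
    (hconj : ∀ β ∈ Pos, ∀ i : Fin n, σ i β ∈ Pos → ∀ t : ℂ, ∃ t' : ℂ,
      xr β t * sbar i = sbar i * xr (σ i β) t')
    (i₀ : Fin n) (L : List (Fin n)) :
    L.Nodup →
    (∀ k, k < L.length → ∀ m, m ≤ k →
      (((L.drop m).take (k - m)).foldr (fun i v => σ i v) (Pi.single (L.getD k i₀) 1)) ∈ Pos) →
    ∃ w : ℕ → ℂ,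
      (L.map fun i => xr (Pi.single i 1) 1).prod * (L.reverse.map sbar).prod
        = (L.reverse.map fun i => y i 1).prod * (stmt17Gamma σ xr i₀ L w).prod := by
  induction L using List.reverseRecOn with
  | nil => intro _ _; exact ⟨fun _ => 0, by simp [stmt17Gamma]⟩
  | append_singleton L' a ih =>
      intro hnd hposL
      have hndL' : L'.Nodup := (List.nodup_append.mp hnd).1
      have haL' : a ∉ L' := by
        intro h
        have := List.nodup_append'.mp hnd
        exact this.2.2 h (List.mem_singleton_self (a := a))
      have hlen : (L' ++ [a]).length = L'.length + 1 := by simp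
      have hgetDa : (L' ++ [a]).getD L'.length i₀ = a := by
        rw [List.getD_eq_getElem _ _ (by simp)]
        simp
      -- positivity for moving x_{α_a}(-1) through S'
      have hA : ∀ m : ℕ, ((L'.drop m).foldr (fun i v => σ i v) (Pi.single a 1)) ∈ Pos := by
        intro m
        by_cases hm : m ≤ L'.length
        · have := hposL L'.length (by simp) m hm
          rw [hgetDa, List.drop_append_of_le_length hm,
            List.take_append_of_le_length (by simp),
            List.take_of_length_le (by simp)] at this
          exact this
        · rw [List.drop_eq_nil_of_le (le_of_not_ge hm)]
          simpa using hsimple a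
      obtain ⟨t', ht'⟩ := stmt17_moveA Pos σ xr sbar hconj L' (Pi.single a 1) hA (-1)
      -- induction hypothesis
      have hposL' : ∀ k, k < L'.length → ∀ m, m ≤ k →
          (((L'.drop m).take (k - m)).foldr (fun i v => σ i v)
            (Pi.single (L'.getD k i₀) 1)) ∈ Pos := by
        intro k hk m hm
        have := hposL k (by simp; omega) m hm
        rw [List.getD_append _ _ _ _ hk, List.drop_append_of_le_length (by omega),
          List.take_append_of_le_length (by simp [List.length_drop]; omega)] at this
        exact this
      obtain ⟨w, hw⟩ := ih hndL' hposL'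
      refine ⟨fun k => if k = L'.length then t' else w k, ?_⟩
      -- Gamma for the extended list
      have hGamma : stmt17Gamma σ xr i₀ (L' ++ [a]) (fun k => if k = L'.length then t' else w k)
          = stmt17Gamma σ xr i₀ L' w
            ++ [xr (L'.foldr (fun i v => σ i v) (Pi.single a 1)) t'] := by
        unfold stmt17Gamma
        rw [hlen, List.range_succ, List.map_append]
        congr 1
        · apply List.map_congr_left
          intro k hk
          have hk' : k < L'.length := List.mem_range.mp hk
          simp only [List.take_append_of_le_length (le_of_lt hk'),
            List.getD_append _ _ _ _ hk', if_neg (Nat.ne_of_lt hk')]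
        · simp [hgetDa, List.take_left]
      rw [hGamma]
      simp only [List.map_append, List.prod_append, List.reverse_append,
        List.reverse_singleton, List.singleton_append, List.map_cons, List.prod_cons,
        List.map_singleton, List.prod_singleton, List.map_nil, List.prod_nil, mul_one]
      -- now pure group manipulation
      calc (L'.map fun i => xr (Pi.single i 1) 1).prod * xr (Pi.single a 1) 1 *
            (sbar a * (L'.reverse.map sbar).prod)
          = (L'.map fun i => xr (Pi.single i 1) 1).prod *
              (xr (Pi.single a 1) 1 * sbar a) * (L'.reverse.map sbar).prod := by
            rw [mul_assoc, mul_assoc, mul_assoc]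
        _ = (L'.map fun i => xr (Pi.single i 1) 1).prod *
              (y a 1 * xr (Pi.single a 1) (-1)) * (L'.reverse.map sbar).prod := by
            rw [hxs a]
        _ = ((L'.map fun i => xr (Pi.single i 1) 1).prod * y a 1) *
              (xr (Pi.single a 1) (-1) * (L'.reverse.map sbar).prod) := by
            rw [mul_assoc, mul_assoc, mul_assoc]
        _ = (y a 1 * (L'.map fun i => xr (Pi.single i 1) 1).prod) *
              ((L'.reverse.map sbar).prod *
                xr (L'.foldr (fun i v => σ i v) (Pi.single a 1)) t') := by
            rw [stmt17_moveB xr y hcomm L' a haL' 1, ht']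
        _ = y a 1 * ((L'.map fun i => xr (Pi.single i 1) 1).prod *
              (L'.reverse.map sbar).prod) *
                xr (L'.foldr (fun i v => σ i v) (Pi.single a 1)) t' := by
            rw [mul_assoc, mul_assoc, mul_assoc]
        _ = y a 1 * ((L'.reverse.map fun i => y i 1).prod * (stmt17Gamma σ xr i₀ L' w).prod) *
                xr (L'.foldr (fun i v => σ i v) (Pi.single a 1)) t' := by rw [hw]
        _ = y a 1 * (L'.reverse.map fun i => y i 1).prod *
              ((stmt17Gamma σ xr i₀ L' w).prod *
                xr (L'.foldr (fun i v => σ i v) (Pi.single a 1)) t') := by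
            rw [mul_assoc, mul_assoc, mul_assoc]

end Aux


/-- In a group `G` with one-parameter root elements `xr β t` (for `β` in a
set `Pos` of positive roots, with simple roots the standard basis vectors `αᵢ`), elements
`y i t`, and representatives `sbar i` of the simple reflections, satisfying
`x_i(1) s̄_i = y_i(1) x_i(−1)`, `x_i(t) y_j(u) = y_j(u) x_i(t)` for `i ≠ j`, and
`x_β(t) s̄_i = s̄_i x_{s_i β}(t')` whenever `β, s_i β ∈ Pos`, one has for any enumeration
`(i₁,…,i_n)` (given by `e`): there exist `w₁,…,w_n ∈ ℂ` with
`x_{i₁}(1)⋯x_{i_n}(1) s̄_{i_n}⋯s̄_{i₁} = y_{i_n}(1)⋯y_{i₁}(1) · x_{γ₁}(wₙ)⋯x_{γₙ}(w₁)`,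
where `γ_k = s_{i₁}⋯s_{i_{k−1}}(α_{i_k})`; in particular the right factor lies in the
subgroup `N` generated by the positive root elements. -/
theorem stmt_17 {G : Type*} [Group G] {n : ℕ}
    -- root lattice data: positive roots, simple roots, simple reflections
    (Pos : Set (Fin n → ℤ))
    (σ : Fin n → (Fin n → ℤ) → (Fin n → ℤ))
    (hsimple : ∀ i, (Pi.single i 1 : Fin n → ℤ) ∈ Pos)
    -- group elements
    (xr : (Fin n → ℤ) → ℂ → G) (y : Fin n → ℂ → G) (sbar : Fin n → G)
    -- relation `x_i(1) s̄_i = y_i(1) x_i(−1)`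
    (hxs : ∀ i, xr (Pi.single i 1) 1 * sbar i = y i 1 * xr (Pi.single i 1) (-1))
    -- relation `x_i(t) y_j(u) = y_j(u) x_i(t)` for `i ≠ j`
    (hcomm : ∀ i j : Fin n, i ≠ j → ∀ t u : ℂ,
      xr (Pi.single i 1) t * y j u = y j u * xr (Pi.single i 1) t)
    -- relation `x_β(t) s̄_i = s̄_i x_{s_i(β)}(t')` when `β` and `s_i(β)` are positive
    (hconj : ∀ β ∈ Pos, ∀ i : Fin n, σ i β ∈ Pos → ∀ t : ℂ, ∃ t' : ℂ,
      xr β t * sbar i = sbar i * xr (σ i β) t')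
    -- an enumeration `(i₁,…,i_n)` of `{1,…,n}`
    (e : Fin n ≃ Fin n)
    -- all partial images `s_{i_m} ⋯ s_{i_{k−1}}(α_{i_k})` are positive roots
    (hpos : ∀ k : Fin n, ∀ m : ℕ, m ≤ (k : ℕ) →
      ((((List.ofFn fun l => e l).drop m).take ((k : ℕ) - m)).foldr
          (fun i v => σ i v) (Pi.single (e k) 1)) ∈ Pos) :
    ∃ w : Fin n → ℂ,
      ((List.ofFn fun k => xr (Pi.single (e k) 1) 1).prod *
        ((List.ofFn fun k => sbar (e k)).reverse).prod
      = ((List.ofFn fun k => y (e k) 1).reverse).prod *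
        (List.ofFn fun k : Fin n =>
          xr (((List.ofFn fun l => e l).take (k : ℕ)).foldr
                (fun i v => σ i v) (Pi.single (e k) 1)) (w k)).prod) ∧
      (List.ofFn fun k : Fin n =>
          xr (((List.ofFn fun l => e l).take (k : ℕ)).foldr
                (fun i v => σ i v) (Pi.single (e k) 1)) (w k)).prod ∈
        Subgroup.closure {g : G | ∃ β ∈ Pos, ∃ t : ℂ, g = xr β t} := by
  rcases Nat.eq_zero_or_pos n with h0 | h0
  · subst h0
    exact ⟨fun k => 0, by simp, by
      simp only [List.ofFn_zero, List.prod_nil]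
      exact Subgroup.one_mem _⟩
  · set L : List (Fin n) := List.ofFn fun l => e l with hL
    have hLlen : L.length = n := by simp [hL]
    have i₀ : Fin n := ⟨0, h0⟩
    have hnd : L.Nodup := List.nodup_ofFn.mpr e.injective
    have hposL : ∀ k, k < L.length → ∀ m, m ≤ k →
        (((L.drop m).take (k - m)).foldr (fun i v => σ i v)
          (Pi.single (L.getD k i₀) 1)) ∈ Pos := by
      intro k hk m hm
      have hk' : k < n := hLlen ▸ hk
      have hget : L.getD k i₀ = e ⟨k, hk'⟩ := by
        rw [List.getD_eq_getElem _ _ hk]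
        simp [hL]
      rw [hget]
      exact hpos ⟨k, hk'⟩ m hm
    obtain ⟨w, hw⟩ := stmt17_key Pos σ xr y sbar hsimple hxs hcomm hconj i₀ L hnd hposL
    have hΓ : stmt17Gamma σ xr i₀ L w
        = List.ofFn (fun k : Fin n =>
            xr ((L.take (k : ℕ)).foldr (fun i v => σ i v) (Pi.single (e k) 1)) (w (k : ℕ))) := by
      apply List.ext_getElem
      · simp [stmt17Gamma, hLlen]
      · intro k h1 h2
        have hk' : k < n := by simpa [stmt17Gamma, hLlen] using h1
        simp only [stmt17Gamma, List.getElem_map, List.getElem_range, List.getElem_ofFn]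
        rw [List.getD_eq_getElem _ _ (by omega : k < L.length)]
        simp [hL]
    have hX : (List.map (fun i => xr (Pi.single i 1) 1) L)
        = List.ofFn fun k => xr (Pi.single (e k) 1) 1 := by
      rw [hL, List.map_ofFn]; rfl
    have hS : (List.map sbar L.reverse) = (List.ofFn fun k => sbar (e k)).reverse := by
      have h1 : (List.ofFn fun k => sbar (e k)) = List.map sbar L := by
        rw [hL, List.map_ofFn]; rfl
      rw [h1, List.map_reverse]
    have hY : (List.map (fun i => y i 1) L.reverse)
        = (List.ofFn fun k => y (e k) 1).reverse := by
      have h1 : (List.ofFn fun k => y (e k) 1) = List.map (fun i => y i 1) L := by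
        rw [hL, List.map_ofFn]; rfl
      rw [h1, List.map_reverse]
    rw [hX, hS, hY, hΓ] at hw
    refine ⟨fun k => w (k : ℕ), hw, ?_⟩
    apply Subgroup.list_prod_mem
    intro g hg
    rw [List.mem_ofFn] at hg
    obtain ⟨k, hk⟩ := hg
    apply Subgroup.subset_closure
    refine ⟨_, ?_, w (k : ℕ), hk.symm⟩
    have := hpos k 0 (Nat.zero_le _)
    simpa using this
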